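/- Let f̃ = f + φ where f : E → ℝ is convex, p-times continuously differentiable (p ≥ 2) with p-th derivative ν-Hölder continuous of constant H_{f,p}(ν), and φ is proper closed convex. Fix x ∈ dom φ and H ≥ max{p·H_{f,p}(ν), 3θ(p−1)!} with θ ≥ 0. Suppose x⁺ satisfies Φ_{x,p}(x⁺) + (H/p!)‖x⁺−x‖^{p+ν} + φ(x⁺) ≤ f̃(x) and ‖∇Ω(x⁺) + g_φ(x⁺)‖ ≤ θ‖x⁺−x‖^{p+ν−1} for some g_φ(x⁺) ∈ ∂φ(x⁺), where Ω(y) = Φ_{x,p}(y) + (H/p!)‖y−x‖^{p+ν}. Then f̃(x) − f̃(x⁺) ≥ (1/(8(p+1)!·H^{1/(p+ν−1)}))·‖∇f(x⁺) + g_φ(x⁺)‖^{(p+ν)/(p+ν−1)}. -/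

import Mathlib

open RealInnerProductSpace
open Finset

set_option linter.unusedSectionVars false
set_option maxHeartbeats 1600000

/-- The `p`-th order Taylor polynomial of `f` at `x`, evaluated at `y`. -/
noncomputable def taylorPoly {E : Type*} [NormedAddCommGroup E] [NormedSpace ℝ E]
    (f : E → ℝ) (p : ℕ) (x y : E) : ℝ :=
  f x + ∑ i ∈ Finset.Icc 1 p, (1 / (i.factorial : ℝ)) * iteratedFDeriv ℝ i f x (fun _ => y - x)



section Sym
variable {E : Type*} [NormedAddCommGroup E] [NormedSpace ℝ E]
variable {F : Type*} [NormedAddCommGroup F] [NormedSpace ℝ F]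

lemma eval_fderiv_itf (n : ℕ) (f : E → F) {x : E}
    (hdiff : DifferentiableAt ℝ (iteratedFDeriv ℝ n f) x) (w : Fin n → E) (v : E) :
    fderiv ℝ (fun y => iteratedFDeriv ℝ n f y w) x v
      = fderiv ℝ (iteratedFDeriv ℝ n f) x v w := by
  have h := (ContinuousMultilinearMap.apply ℝ (fun _ : Fin n => E) F w).hasFDerivAt.comp x
    hdiff.hasFDerivAt
  rw [show (fun y => iteratedFDeriv ℝ n f y w)
      = (⇑(ContinuousMultilinearMap.apply ℝ (fun _ : Fin n => E) F w)
          ∘ iteratedFDeriv ℝ n f) from rfl, h.fderiv]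
  rfl

lemma tail_update_succ (v h : E) (n : ℕ) (j : Fin (n+1)) :
    Fin.tail (Function.update (fun _ : Fin (n+2) => v) j.succ h)
      = Function.update (fun _ : Fin (n+1) => v) j h := by
  funext i
  simp only [Fin.tail, Function.update_apply, Fin.succ_inj]

lemma tail_snoc_const (v h : E) (n : ℕ) :
    Fin.tail (Fin.snoc (fun _ : Fin (n+1) => v) h : Fin (n+2) → E)
      = (Fin.snoc (fun _ : Fin n => v) h : Fin (n+1) → E) := by
  funext i
  refine Fin.lastCases ?_ (fun i' => ?_) i
  · have : (Fin.last n).succ = Fin.last (n+1) := rfl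
    simp [Fin.tail, this]
  · have : (i'.castSucc).succ = (i'.succ).castSucc := (Fin.succ_castSucc i').symm
    simp only [Fin.tail, this, Fin.snoc_castSucc]

/-- first two arguments of the (n+2)-th derivative commute -/
lemma itf_first_two (n : ℕ) (f : E → F) (hf : ContDiff ℝ (n+2 : ℕ) f) (x a b : E)
    (w : Fin n → E) :
    iteratedFDeriv ℝ (n+2) f x (Fin.cons a (Fin.cons b w))
      = iteratedFDeriv ℝ (n+2) f x (Fin.cons b (Fin.cons a w)) := by
  set G := iteratedFDeriv ℝ n f with hGdef
  have hG : ContDiff ℝ 2 G := hf.iteratedFDeriv_right (by norm_cast; omega)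
  have hG1 : ∀ y, HasFDerivAt G (fderiv ℝ G y) y := fun y =>
    ((hG.differentiable (by norm_num)) y).hasFDerivAt
  have hG2 : HasFDerivAt (fderiv ℝ G) (fderiv ℝ (fderiv ℝ G) x) x :=
    (((hG.fderiv_right (m := 1) (le_refl 2)).differentiable (by norm_num)) x).hasFDerivAt
  have sym := second_derivative_symmetric hG1 hG2 a b
  have hd1 : DifferentiableAt ℝ (iteratedFDeriv ℝ (n+1) f) x :=
    (hf.differentiable_iteratedFDeriv (by exact_mod_cast Nat.lt_succ_self (n+1))) x
  have bridge : ∀ a b : E,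
      iteratedFDeriv ℝ (n+2) f x (Fin.cons a (Fin.cons b w))
        = fderiv ℝ (fderiv ℝ G) x a b w := by
    intro a b
    rw [iteratedFDeriv_succ_apply_left, Fin.cons_zero, Fin.tail_cons]
    rw [← eval_fderiv_itf (n+1) f hd1 (Fin.cons b w) a]
    have e : (fun y => iteratedFDeriv ℝ (n+1) f y (Fin.cons b w))
        = fun y => (fderiv ℝ G y b) w := by
      funext y
      rw [iteratedFDeriv_succ_apply_left, Fin.cons_zero, Fin.tail_cons]
    rw [e]
    set A := ((ContinuousMultilinearMap.apply ℝ (fun _ : Fin n => E) F w).comp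
          (ContinuousLinearMap.apply ℝ (ContinuousMultilinearMap ℝ (fun _ : Fin n => E) F) b))
      with hA
    have hcomp := (A.hasFDerivAt (x := fderiv ℝ G x)).comp (g := ⇑A) x hG2.differentiableAt.hasFDerivAt
    have heq : (⇑A ∘ fderiv ℝ G) = fun y => (fderiv ℝ G y b) w := by funext y; rfl
    rw [heq] at hcomp
    rw [hcomp.fderiv]
    rfl
  rw [bridge, bridge, sym]

/-- move the exceptional argument to the last slot -/
lemma itf_update_eq_snoc : ∀ (n : ℕ) (f : E → F), ContDiff ℝ (n+1 : ℕ) f →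
    ∀ (x v h : E) (j : Fin (n+1)),
    iteratedFDeriv ℝ (n+1) f x (Function.update (fun _ => v) j h)
      = iteratedFDeriv ℝ (n+1) f x (Fin.snoc (fun _ => v) h) := by
  intro n
  induction n with
  | zero =>
    intro f hf x v h j
    congr 1
    funext i
    fin_cases i; fin_cases j
    simp [Fin.snoc]
  | succ n IH =>
    intro f hf x v h j
    have hf' : ContDiff ℝ (n+1 : ℕ) f := hf.of_le (by exact_mod_cast Nat.le_succ (n+1))
    have hdiff : ∀ z, DifferentiableAt ℝ (iteratedFDeriv ℝ (n+1) f) z := fun z =>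
      (hf.differentiable_iteratedFDeriv (by exact_mod_cast Nat.lt_succ_self (n+1))) z
    have succcase : ∀ j' : Fin (n+1),
        iteratedFDeriv ℝ (n+2) f x (Function.update (fun _ => v) j'.succ h)
          = iteratedFDeriv ℝ (n+2) f x (Fin.snoc (fun _ => v) h) := by
      intro j'
      have key : (fun y => iteratedFDeriv ℝ (n+1) f y
            (Function.update (fun _ : Fin (n+1) => v) j' h))
          = (fun y => iteratedFDeriv ℝ (n+1) f y (Fin.snoc (fun _ : Fin n => v) h)) :=
        funext fun y => IH f hf' y v h j'
      rw [iteratedFDeriv_succ_apply_left, iteratedFDeriv_succ_apply_left]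
      have h0 : (Function.update (fun _ : Fin (n+2) => v) j'.succ h) 0 = v := by
        simp [Function.update_apply, (Fin.succ_ne_zero j').symm]
      have h0' : (Fin.snoc (fun _ : Fin (n+1) => v) h : Fin (n+2) → E) 0 = v := by
        have : (0 : Fin (n+2)) = (0 : Fin (n+1)).castSucc := rfl
        rw [this, Fin.snoc_castSucc]
      rw [h0, h0', tail_update_succ, tail_snoc_const]
      rw [← eval_fderiv_itf (n+1) f (hdiff x), ← eval_fderiv_itf (n+1) f (hdiff x), key]
    refine Fin.cases ?_ succcase j
    · have e1 : Function.update (fun _ : Fin (n+2) => v) 0 h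
          = Fin.cons h (Fin.cons v (fun _ => v)) := by
        funext i
        refine Fin.cases ?_ (fun i' => ?_) i
        · simp
        · refine Fin.cases ?_ (fun i'' => ?_) i'
          · simp [Function.update_apply, Fin.succ_ne_zero]
          · simp [Function.update_apply, Fin.succ_ne_zero]
      have e2 : Function.update (fun _ : Fin (n+2) => v) ((0 : Fin (n+1)).succ) h
          = Fin.cons v (Fin.cons h (fun _ => v)) := by
        funext i
        refine Fin.cases ?_ (fun i' => ?_) i
        · simp [Function.update_apply, (Fin.succ_ne_zero (0 : Fin (n+1))).symm]
        · refine Fin.cases ?_ (fun i'' => ?_) i'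
          · simp [Function.update_apply, Fin.succ_inj]
          · have h1 : ((1 : Fin (n+2))) = (0 : Fin (n+1)).succ := rfl
            have h2 : i''.succ.succ ≠ (1 : Fin (n+2)) := by
              rw [h1, Ne, Fin.succ_inj]
              exact Fin.succ_ne_zero i''
            simp [Function.update_apply, h2]
      rw [e1, itf_first_two n f hf x h v (fun _ => v), ← e2, succcase 0]

/-- The key symmetry fact: derivative applied to `v,…,v` with `h` in slot `j` equals
the `(n)`-th derivative of `fderiv` on the diagonal, applied to `h`. -/
lemma itf_update_apply (n : ℕ) (f : E → F) (hf : ContDiff ℝ (n+1 : ℕ) f)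
    (x v h : E) (j : Fin (n+1)) :
    iteratedFDeriv ℝ (n+1) f x (Function.update (fun _ => v) j h)
      = iteratedFDeriv ℝ n (fderiv ℝ f) x (fun _ => v) h := by
  rw [itf_update_eq_snoc n f hf x v h j, iteratedFDeriv_succ_apply_right]
  simp [Fin.init_snoc]

end Sym


section Taylor
variable {E : Type*} [NormedAddCommGroup E] [NormedSpace ℝ E]
variable {F : Type*} [NormedAddCommGroup F] [NormedSpace ℝ F] [CompleteSpace F]

set_option maxHeartbeats 1600000 in
lemma taylor_holder_remainder (p : ℕ) (f : E → F) (hf : ContDiff ℝ (p : ℕ) f)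
    {ν C : ℝ} (hν : 0 ≤ ν) (hC : 0 ≤ C)
    (hHol : ∀ u v : E, ‖iteratedFDeriv ℝ p f u - iteratedFDeriv ℝ p f v‖ ≤ C * ‖u - v‖ ^ ν)
    (x y : E) :
    ‖f y - ∑ i ∈ Finset.range (p+1), ((i.factorial : ℝ))⁻¹ •
        iteratedFDeriv ℝ i f x (fun _ => y - x)‖
      ≤ C / (p.factorial : ℝ) * ‖y - x‖ ^ ((p:ℝ) + ν) := by
  rcases eq_or_ne y x with heq | hyx
  · subst heq
    have hsum : ∑ i ∈ Finset.range (p+1), ((i.factorial : ℝ))⁻¹ •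
        iteratedFDeriv ℝ i f y (fun _ => y - y) = f y := by
      rw [Finset.sum_range_succ']
      have h0 : ∀ i ∈ Finset.range p, ((Nat.factorial (i+1) : ℝ))⁻¹ •
          iteratedFDeriv ℝ (i+1) f y (fun _ => y - y) = 0 := by
        intro i _
        rw [show (fun _ : Fin (i+1) => y - y) = (fun _ : Fin (i+1) => (0:E)) by
          funext _; simp]
        rw [(iteratedFDeriv ℝ (i+1) f y).map_coord_zero (0 : Fin (i+1)) rfl, smul_zero]
      rw [Finset.sum_congr rfl h0]
      simp
    rw [hsum, sub_self, norm_zero]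
    positivity
  have hr : (0:ℝ) < ‖y - x‖ := by
    rw [norm_pos_iff, sub_ne_zero]; exact hyx
  set r := y - x with hrdef
  -- main induction
  have key : ∀ d k : ℕ, k + d = p → ∀ t : ℝ, 0 ≤ t → t ≤ 1 →
      ‖iteratedFDeriv ℝ k f (x + t • r) (fun _ => r)
        - ∑ i ∈ Finset.range (d+1), (t^i / (i.factorial : ℝ)) •
            iteratedFDeriv ℝ (k+i) f x (fun _ => r)‖
      ≤ C / (d.factorial : ℝ) * (‖r‖ ^ ((d:ℝ) + ν) * ‖r‖ ^ k) * t ^ ((d:ℝ) + ν) := by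
    intro d
    induction d with
    | zero =>
      intro k hk t ht0 ht1
      rw [Finset.sum_range_one]
      have e1 : (t^0 / ((Nat.factorial 0 : ℕ) : ℝ)) •
          iteratedFDeriv ℝ (k+0) f x (fun _ => r) = iteratedFDeriv ℝ k f x (fun _ => r) := by
        simp
      rw [e1, ← ContinuousMultilinearMap.sub_apply]
      calc ‖(iteratedFDeriv ℝ k f (x + t • r) - iteratedFDeriv ℝ k f x) (fun _ => r)‖
          ≤ ‖iteratedFDeriv ℝ k f (x + t • r) - iteratedFDeriv ℝ k f x‖
            * ∏ _i : Fin k, ‖r‖ :=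
            (iteratedFDeriv ℝ k f (x + t • r) - iteratedFDeriv ℝ k f x).le_opNorm _
        _ ≤ (C * ‖(x + t • r) - x‖ ^ ν) * ‖r‖ ^ k := by
            rw [Finset.prod_const, Finset.card_univ, Fintype.card_fin]
            have hH : ‖iteratedFDeriv ℝ k f (x + t • r) - iteratedFDeriv ℝ k f x‖
                ≤ C * ‖(x + t • r) - x‖ ^ ν := by
              have hkp : k = p := by omega
              subst hkp
              exact hHol _ _
            exact mul_le_mul_of_nonneg_right hH (by positivity)
        _ = (C * (t ^ ν * ‖r‖ ^ ν)) * ‖r‖ ^ k := by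
            rw [add_sub_cancel_left, norm_smul, Real.norm_eq_abs, abs_of_nonneg ht0,
              Real.mul_rpow ht0 (norm_nonneg r)]
        _ = C / ((Nat.factorial 0 : ℕ) : ℝ)
              * (‖r‖ ^ (((0:ℕ):ℝ) + ν) * ‖r‖ ^ k) * t ^ (((0:ℕ):ℝ) + ν) := by
            rw [Nat.cast_zero, zero_add, Nat.factorial_zero]
            push_cast
            ring
    | succ d IH =>
      intro k hk t ht0 ht1
      have hkp : k < p := by omega
      have hk1p : k + 1 + d = p := by omega
      set S : ℝ → F := fun u => iteratedFDeriv ℝ k f (x + u • r) (fun _ => r)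
        - ∑ i ∈ Finset.range (d+1+1), (u^i / (i.factorial : ℝ)) •
            iteratedFDeriv ℝ (k+i) f x (fun _ => r) with hSdef
      set S' : ℝ → F := fun u => iteratedFDeriv ℝ (k+1) f (x + u • r) (fun _ => r)
        - ∑ i ∈ Finset.range (d+1), (u^i / (i.factorial : ℝ)) •
            iteratedFDeriv ℝ (k+1+i) f x (fun _ => r) with hS'def
      have hline : ∀ s : ℝ, HasDerivAt (fun u : ℝ => x + u • r) r s := fun s => by
        simpa using ((hasDerivAt_id s).smul_const r).const_add x
      have hdiffk : ∀ z, HasFDerivAt (iteratedFDeriv ℝ k f)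
          (fderiv ℝ (iteratedFDeriv ℝ k f) z) z := fun z =>
        ((hf.differentiable_iteratedFDeriv (by exact_mod_cast hkp)) z).hasFDerivAt
      have hA : ∀ s : ℝ, HasDerivAt (fun u => iteratedFDeriv ℝ k f (x + u • r) (fun _ => r))
          (iteratedFDeriv ℝ (k+1) f (x + s • r) (fun _ => r)) s := by
        intro s
        have h1 := ((hdiffk (x + s • r)).comp_hasDerivAt s (hline s))
        have h2 := (ContinuousMultilinearMap.apply ℝ (fun _ : Fin k => E) F
          (fun _ => r)).hasFDerivAt.comp_hasDerivAt s h1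
        convert h2 using 1
        · rfl
        · rw [iteratedFDeriv_succ_apply_left]; rfl
      have hB : ∀ s : ℝ, HasDerivAt (fun u => ∑ i ∈ Finset.range (d+1+1),
            (u^i / (i.factorial : ℝ)) • iteratedFDeriv ℝ (k+i) f x (fun _ => r))
          (∑ i ∈ Finset.range (d+1), (s^i / (i.factorial : ℝ)) •
            iteratedFDeriv ℝ (k+1+i) f x (fun _ => r)) s := by
        intro s
        have h1 : HasDerivAt (fun u : ℝ => ∑ i ∈ Finset.range (d+1+1),
              (u^i / (i.factorial : ℝ)) • iteratedFDeriv ℝ (k+i) f x (fun _ => r))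
            (∑ i ∈ Finset.range (d+1+1), ((i:ℝ) * s^(i-1) / (i.factorial : ℝ)) •
              iteratedFDeriv ℝ (k+i) f x (fun _ => r)) s := by
          refine HasDerivAt.fun_sum fun i _ => ?_
          simpa [div_eq_mul_inv, mul_comm, mul_assoc, mul_left_comm] using
            (((hasDerivAt_pow i s).div_const (i.factorial : ℝ)).smul_const
              (iteratedFDeriv ℝ (k+i) f x (fun _ => r)))
        convert h1 using 1
        conv_rhs => rw [Finset.sum_range_succ']
        have hz : (((0:ℕ):ℝ) * s^(0-1) / ((Nat.factorial 0 : ℕ):ℝ)) •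
            iteratedFDeriv ℝ (k+0) f x (fun _ => r) = 0 := by
          simp
        rw [hz, add_zero]
        refine Finset.sum_congr rfl fun i _ => ?_
        have hfac : ((i+1 : ℕ) : ℝ) * s ^ ((i+1)-1) / ((Nat.factorial (i+1) : ℕ):ℝ)
            = s ^ i / ((Nat.factorial i : ℕ):ℝ) := by
          rw [Nat.factorial_succ, Nat.add_sub_cancel]
          push_cast
          have h1 : ((i:ℝ) + 1) ≠ 0 := by positivity
          have h2 : ((Nat.factorial i : ℕ):ℝ) ≠ 0 := by
            exact_mod_cast Nat.factorial_ne_zero i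
          field_simp
        rw [show k + (i+1) = k + 1 + i by omega, hfac]
      have hS : ∀ s : ℝ, HasDerivAt S (S' s) s := fun s => (hA s).sub (hB s)
      have hS0 : S 0 = 0 := by
        rw [hSdef]
        simp only [zero_smul, add_zero]
        rw [Finset.sum_range_succ']
        have h0 : ∀ i ∈ Finset.range (d+1), ((0:ℝ)^(i+1) / ((Nat.factorial (i+1):ℕ) : ℝ)) •
            iteratedFDeriv ℝ (k+(i+1)) f x (fun _ => r) = 0 := by
          intro i _
          rw [zero_pow (by omega), zero_div, zero_smul]
        rw [Finset.sum_congr rfl h0]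
        simp
      have hS'cont : Continuous S' := by
        rw [hS'def]
        refine Continuous.sub ?_ ?_
        · exact (ContinuousMultilinearMap.apply ℝ (fun _ : Fin (k+1) => E) F
            (fun _ => r)).continuous.comp ((hf.continuous_iteratedFDeriv
              (by exact_mod_cast hkp)).comp (by continuity))
        · exact continuous_finset_sum _ fun i _ => ((continuous_pow i).div_const _).smul
            continuous_const
      have hint : ∀ u : ℝ, IntervalIntegrable S' MeasureTheory.volume 0 u := fun u =>
        hS'cont.intervalIntegrable 0 u
      have hftc : ∫ s in (0:ℝ)..t, S' s = S t - S 0 :=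
        intervalIntegral.integral_eq_sub_of_hasDerivAt (fun s _ => hS s) (hint t)
      have hSt : ‖S t‖ ≤ ∫ s in (0:ℝ)..t, ‖S' s‖ := by
        rw [show S t = ∫ s in (0:ℝ)..t, S' s by rw [hftc, hS0, sub_zero]]
        exact intervalIntegral.norm_integral_le_integral_norm ht0
      set K : ℝ := C / (d.factorial : ℝ) * (‖r‖ ^ ((d:ℝ) + ν) * ‖r‖ ^ (k+1)) with hK
      have hmono : ∫ s in (0:ℝ)..t, ‖S' s‖ ≤ ∫ s in (0:ℝ)..t, K * s ^ ((d:ℝ) + ν) := by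
        refine intervalIntegral.integral_mono_on ht0 (hint t).norm
          (((intervalIntegral.intervalIntegrable_rpow' (by linarith)).const_mul K)) ?_
        intro s hs
        exact IH (k+1) hk1p s hs.1 (le_trans hs.2 ht1)
      have hval : ∫ s in (0:ℝ)..t, K * s ^ ((d:ℝ) + ν)
          = K * (t ^ ((d:ℝ) + ν + 1) / ((d:ℝ) + ν + 1)) := by
        rw [intervalIntegral.integral_const_mul, integral_rpow (Or.inl (by linarith))]
        rw [Real.zero_rpow (by positivity), sub_zero]
      have hcoef : C / (d.factorial : ℝ) / ((d:ℝ) + ν + 1)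
          ≤ C / (((d+1).factorial : ℕ) : ℝ) := by
        rw [div_div, Nat.factorial_succ]
        push_cast
        have hd1 : (0:ℝ) < ((d:ℝ) + 1) * (Nat.factorial d : ℝ) := by positivity
        apply div_le_div_of_nonneg_left hC hd1
        have : (0:ℝ) < (Nat.factorial d : ℝ) := by positivity
        nlinarith
      have hgoalexp : (((d+1:ℕ)):ℝ) + ν = (d:ℝ) + ν + 1 := by push_cast; ring
      calc ‖S t‖ ≤ K * (t ^ ((d:ℝ) + ν + 1) / ((d:ℝ) + ν + 1)) :=
            hSt.trans (hmono.trans_eq hval)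
        _ = (C / (d.factorial : ℝ) / ((d:ℝ) + ν + 1))
              * ((‖r‖ ^ ((d:ℝ) + ν) * ‖r‖ ^ (k+1)) * t ^ ((d:ℝ) + ν + 1)) := by
            rw [hK]; ring
        _ ≤ (C / (((d+1).factorial : ℕ) : ℝ))
              * ((‖r‖ ^ ((d:ℝ) + ν) * ‖r‖ ^ (k+1)) * t ^ ((d:ℝ) + ν + 1)) := by
            refine mul_le_mul_of_nonneg_right hcoef ?_
            exact mul_nonneg (by positivity) (Real.rpow_nonneg ht0 _)
        _ = C / (((d+1).factorial : ℕ) : ℝ)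
              * (‖r‖ ^ ((((d+1):ℕ):ℝ) + ν) * ‖r‖ ^ k) * t ^ ((((d+1):ℕ):ℝ) + ν) := by
            rw [hgoalexp, Real.rpow_add_one (ne_of_gt hr)]
            ring
  have hxy : x + (1:ℝ) • r = y := by
    rw [one_smul, hrdef]; abel
  calc ‖f y - ∑ i ∈ Finset.range (p+1), ((i.factorial : ℝ))⁻¹ •
        iteratedFDeriv ℝ i f x (fun _ => y - x)‖
      = ‖iteratedFDeriv ℝ 0 f (x + (1:ℝ) • r) (fun _ => r)
        - ∑ i ∈ Finset.range (p+1), ((1:ℝ)^i / (i.factorial : ℝ)) •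
            iteratedFDeriv ℝ (0+i) f x (fun _ => r)‖ := by
        rw [iteratedFDeriv_zero_apply, hxy]
        have hsum_eq : ∑ i ∈ Finset.range (p+1), ((i.factorial : ℝ))⁻¹ •
              iteratedFDeriv ℝ i f x (fun _ => y - x)
            = ∑ i ∈ Finset.range (p+1), ((1:ℝ)^i / (i.factorial : ℝ)) •
              iteratedFDeriv ℝ (0+i) f x (fun _ => r) := by
          refine Finset.sum_congr rfl fun i _ => ?_
          rw [one_pow, zero_add, one_div, ← hrdef]
        rw [hsum_eq]
    _ ≤ C / (p.factorial : ℝ) * (‖r‖ ^ ((p:ℝ) + ν) * ‖r‖ ^ 0) * (1:ℝ) ^ ((p:ℝ) + ν) :=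
        key p 0 (by omega) 1 zero_le_one le_rfl
    _ = C / (p.factorial : ℝ) * ‖r‖ ^ ((p:ℝ) + ν) := by
        rw [Real.one_rpow, pow_zero, mul_one, mul_one]

end Taylor

section L2
variable {E : Type*} [NormedAddCommGroup E] [NormedSpace ℝ E]
variable {F : Type*} [NormedAddCommGroup F] [NormedSpace ℝ F]


lemma taylorPoly_eq (f : E → ℝ) (p : ℕ) (x y : E) :
    taylorPoly f p x y = ∑ i ∈ Finset.range (p+1), ((i.factorial : ℝ))⁻¹ •
      iteratedFDeriv ℝ i f x (fun _ => y - x) := by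
  rw [taylorPoly, Finset.sum_range_succ']
  have h0 : (((0:ℕ).factorial : ℝ))⁻¹ • iteratedFDeriv ℝ 0 f x (fun _ => y - x) = f x := by
    simp
  rw [h0, show Finset.Icc 1 p = Finset.Ico 1 (p+1) from (Finset.Ico_add_one_right_eq_Icc 1 p).symm,
    Finset.sum_Ico_eq_sum_range, Nat.add_sub_cancel, add_comm]
  congr 1
  refine Finset.sum_congr rfl fun i _ => ?_
  rw [one_div, smul_eq_mul, show 1 + i = i + 1 by omega]

lemma hasFDerivAt_taylorPoly (p : ℕ) (f : E → ℝ) (hf : ContDiff ℝ (p : ℕ) f) (x y : E) :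
    HasFDerivAt (fun z => ∑ i ∈ Finset.range (p+1), ((i.factorial : ℝ))⁻¹ •
        iteratedFDeriv ℝ i f x (fun _ => z - x))
      (∑ j ∈ Finset.range p, ((j.factorial : ℝ))⁻¹ •
        (iteratedFDeriv ℝ j (fderiv ℝ f) x (fun _ => y - x) : E →L[ℝ] ℝ)) y := by
  classical
  -- derivative of each term
  have hterm : ∀ i ∈ Finset.range (p+1), HasFDerivAt
      (fun z => ((i.factorial : ℝ))⁻¹ • iteratedFDeriv ℝ i f x (fun _ => z - x))
      (if h : i = 0 then 0 else
        (((i-1).factorial : ℝ))⁻¹ •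
          (iteratedFDeriv ℝ (i-1) (fderiv ℝ f) x (fun _ => y - x) : E →L[ℝ] ℝ)) y := by
    intro i hi
    rcases eq_or_ne i 0 with h0 | hne
    · subst h0
      rw [dif_pos rfl]
      have : (fun z : E => ((Nat.factorial 0 : ℕ) : ℝ)⁻¹ •
          iteratedFDeriv ℝ 0 f x (fun _ => z - x)) = fun _ => f x := by
        funext z; simp
      rw [this]
      exact hasFDerivAt_const _ _
    · obtain ⟨j, rfl⟩ : ∃ j, i = j + 1 := ⟨i - 1, by omega⟩
      rw [dif_neg (Nat.succ_ne_zero j), Nat.add_sub_cancel]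
      have hjp : j + 1 ≤ p := by
        rw [Finset.mem_range] at hi; omega
      have hsub : ∀ k : Fin (j+1), HasFDerivAt (fun z : E => z - x)
          (ContinuousLinearMap.id ℝ E) y := fun k => (hasFDerivAt_id y).sub_const x
      have h1 := HasFDerivAt.multilinear_comp (iteratedFDeriv ℝ (j+1) f x)
        (g := fun _ (z : E) => z - x) (g' := fun _ => ContinuousLinearMap.id ℝ E)
        (x := y) hsub
      have h2 := h1.const_smul (((Nat.factorial (j+1) : ℕ) : ℝ)⁻¹)
      convert h2 using 1
      · rfl
      · rfl
      · rfl
      · -- identify derivatives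
        ext h
        simp only [ContinuousLinearMap.smul_apply, ContinuousLinearMap.coe_sum',
          Finset.sum_apply, ContinuousLinearMap.coe_comp', Function.comp_apply,
          ContinuousLinearMap.coe_id', id_eq]
        have hupd : ∀ k : Fin (j+1),
            (iteratedFDeriv ℝ (j+1) f x).toContinuousLinearMap (fun _ => y - x) k h
              = iteratedFDeriv ℝ j (fderiv ℝ f) x (fun _ => y - x) h := by
          intro k
          have := itf_update_apply j f (hf.of_le (by exact_mod_cast hjp)) x (y - x) h k
          rw [← this]
          rfl
        rw [Finset.sum_congr rfl fun k _ => hupd k, Finset.sum_const, Finset.card_univ,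
          Fintype.card_fin]
        rw [nsmul_eq_mul]
        rw [Nat.factorial_succ]
        push_cast
        have h1 : ((j:ℝ) + 1) ≠ 0 := by positivity
        have h2 : ((Nat.factorial j : ℕ):ℝ) ≠ 0 := by exact_mod_cast Nat.factorial_ne_zero j
        have h3 : ((Nat.factorial j : ℕ):ℝ) + ((Nat.factorial j : ℕ):ℝ) * j ≠ 0 := by positivity
        field_simp
        have hD := mul_inv_cancel₀ h3
        have ha := mul_inv_cancel₀ h2
        linear_combination (-(iteratedFDeriv ℝ j (fderiv ℝ f) x (fun _ => y - x) h
            * ((Nat.factorial j : ℕ):ℝ)⁻¹)) * hD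
          + (iteratedFDeriv ℝ j (fderiv ℝ f) x (fun _ => y - x) h * ((j:ℝ) + 1)
            * (((Nat.factorial j : ℕ):ℝ) + ((Nat.factorial j : ℕ):ℝ) * j)⁻¹) * ha
  have hsum := HasFDerivAt.fun_sum hterm
  convert hsum using 1
  · rfl
  · rfl
  rw [Finset.sum_range_succ']
  rw [dif_pos rfl, add_zero]
  refine (Finset.sum_congr rfl fun j _ => ?_).symm
  rw [dif_neg (Nat.succ_ne_zero j)]
  simp

end L2

section Rpow
variable {E : Type*} [NormedAddCommGroup E] [InnerProductSpace ℝ E]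

lemma hasFDerivAt_norm_rpow_sub (x y : E) {q : ℝ} (hq : 2 ≤ q) :
    HasFDerivAt (fun z : E => ‖z - x‖ ^ q)
      ((q * ‖y - x‖ ^ (q - 2)) • (innerSL ℝ (y - x))) y := by
  have h := (hasFDerivAt_norm_rpow (y - x) (by linarith : (1:ℝ) < q)).comp y
    ((hasFDerivAt_id y).sub_const x)
  simpa [Function.comp_def] using h

end Rpow

theorem composite_descent_lemma
    {E : Type*} [NormedAddCommGroup E] [InnerProductSpace ℝ E] [FiniteDimensional ℝ E]
    (f φ : E → ℝ) (p : ℕ) (hp : 2 ≤ p) (ν Hf H θ : ℝ)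
    (hν : ν ∈ Set.Icc (0:ℝ) 1) (hHf : 0 ≤ Hf) (hθ : 0 ≤ θ)
    (hf : ContDiff ℝ p f) (hconv : ConvexOn ℝ Set.univ f)
    (hHol : ∀ x y : E, ‖iteratedFDeriv ℝ p f x - iteratedFDeriv ℝ p f y‖ ≤ Hf * ‖x - y‖ ^ ν)
    (hφconv : ConvexOn ℝ Set.univ φ) (hφlsc : LowerSemicontinuous φ)
    (hH : max ((p : ℝ) * Hf) (3 * θ * ((p - 1).factorial : ℝ)) ≤ H)
    (x xp gφ : E)
    -- gφ is a subgradient of φ at xp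
    (hsub : ∀ y : E, φ xp + ⟪gφ, y - xp⟫ ≤ φ y)
    -- the composite model value at xp does not exceed f̃(x)
    (hmodel : taylorPoly f p x xp + H / (p.factorial : ℝ) * ‖xp - x‖ ^ ((p : ℝ) + ν) + φ xp ≤
        f x + φ x)
    -- inexact stationarity of the model Ω(y) = Φ_{x,p}(y) + (H/p!)‖y-x‖^{p+ν}
    (happrox : ‖gradient
        (fun y => taylorPoly f p x y + H / (p.factorial : ℝ) * ‖y - x‖ ^ ((p : ℝ) + ν)) xp
        + gφ‖ ≤ θ * ‖xp - x‖ ^ ((p : ℝ) + ν - 1)) :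
    (f x + φ x) - (f xp + φ xp) ≥
      1 / (8 * (((p + 1).factorial : ℝ)) * H ^ (1 / ((p : ℝ) + ν - 1)))
        * ‖gradient f xp + gφ‖ ^ (((p : ℝ) + ν) / ((p : ℝ) + ν - 1)) := by
  obtain ⟨m, rfl⟩ : ∃ m, p = m + 2 := ⟨p - 2, by omega⟩
  obtain ⟨hν0, hν1⟩ := hν
  have hF : (0:ℝ) < ((m+2).factorial : ℝ) := by exact_mod_cast Nat.factorial_pos (m+2)
  have hF1 : (0:ℝ) < ((m+1).factorial : ℝ) := by exact_mod_cast Nat.factorial_pos (m+1)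
  have hP2 : (2:ℝ) ≤ ((m+2:ℕ):ℝ) := by exact_mod_cast (by omega : 2 ≤ m+2)
  have hq2 : (2:ℝ) ≤ ((m+2:ℕ):ℝ) + ν := by linarith
  have hs0 : (0:ℝ) < ((m+2:ℕ):ℝ) + ν - 1 := by linarith
  have hq0 : (0:ℝ) < ((m+2:ℕ):ℝ) + ν := by linarith
  have hHfH : ((m+2:ℕ):ℝ) * Hf ≤ H := le_trans (le_max_left _ _) hH
  have hθH : 3 * θ * ((m+1).factorial : ℝ) ≤ H := by
    have h := le_trans (le_max_right _ _) hH
    rwa [show m+2-1 = m+1 by omega] at h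
  have hH0 : (0:ℝ) ≤ H := le_trans (by positivity) hHfH
  have hHf2 : Hf ≤ H / 2 := by nlinarith
  -- Taylor remainder bound for f
  have hT0 := taylor_holder_remainder (m+2) f hf hν0 hHf hHol x xp
  -- the derivative map
  have hfd : ContDiff ℝ ((m+1 : ℕ)) (fderiv ℝ f) :=
    hf.fderiv_right (by exact_mod_cast (by omega : m+1+1 ≤ m+2))
  have hHol' : ∀ u v : E, ‖iteratedFDeriv ℝ (m+1) (fderiv ℝ f) u
      - iteratedFDeriv ℝ (m+1) (fderiv ℝ f) v‖ ≤ Hf * ‖u - v‖ ^ ν := by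
    intro u v
    have h := hHol u v
    rw [iteratedFDeriv_succ_eq_comp_right (n := m+1) (x := u),
      iteratedFDeriv_succ_eq_comp_right (n := m+1) (x := v), Function.comp_apply,
      Function.comp_apply, ← LinearIsometryEquiv.map_sub,
      LinearIsometryEquiv.norm_map] at h
    exact h
  have hT1 := taylor_holder_remainder (m+1) (fderiv ℝ f) hfd hν0 hHf hHol' x xp
  rw [show m+1+1 = m+2 from rfl] at hT1
  -- derivative of the Taylor polynomial at xp
  have hTay : HasFDerivAt (fun z => taylorPoly f (m+2) x z)
      (∑ j ∈ Finset.range (m+2), ((j.factorial : ℝ))⁻¹ •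
        (iteratedFDeriv ℝ j (fderiv ℝ f) x (fun _ => xp - x) : E →L[ℝ] ℝ)) xp := by
    have h := hasFDerivAt_taylorPoly (m+2) f hf x xp
    have hfe : (fun z => ∑ i ∈ Finset.range (m+2+1), ((i.factorial : ℝ))⁻¹ •
        iteratedFDeriv ℝ i f x (fun _ => z - x)) = fun z => taylorPoly f (m+2) x z := by
      funext z; rw [taylorPoly_eq]
    rwa [hfe] at h
  have hrp : HasFDerivAt (fun z : E => H / ((m+2).factorial : ℝ) *
      ‖z - x‖ ^ (((m+2:ℕ):ℝ) + ν))
      ((H / ((m+2).factorial : ℝ)) • (((((m+2:ℕ):ℝ) + ν) *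
        ‖xp - x‖ ^ ((((m+2:ℕ):ℝ) + ν) - 2)) • innerSL ℝ (xp - x))) xp :=
    (hasFDerivAt_norm_rpow_sub x xp hq2).const_mul (H / ((m+2).factorial : ℝ))
  have hΩfd : HasFDerivAt (fun y => taylorPoly f (m+2) x y + H / ((m+2).factorial : ℝ) *
      ‖y - x‖ ^ (((m+2:ℕ):ℝ) + ν))
      ((∑ j ∈ Finset.range (m+2), ((j.factorial : ℝ))⁻¹ •
        (iteratedFDeriv ℝ j (fderiv ℝ f) x (fun _ => xp - x) : E →L[ℝ] ℝ))
       + (H / ((m+2).factorial : ℝ)) • (((((m+2:ℕ):ℝ) + ν) *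
        ‖xp - x‖ ^ ((((m+2:ℕ):ℝ) + ν) - 2)) • innerSL ℝ (xp - x))) xp := hTay.add hrp
  have hΩg := hasFDerivAt_iff_hasGradientAt.mp hΩfd
  rw [hΩg.gradient] at happrox
  have hdfull : Differentiable ℝ f := hf.differentiable (by simp)
  have hgf : gradient f xp = (InnerProductSpace.toDual ℝ E).symm (fderiv ℝ f xp) :=
    (hasFDerivAt_iff_hasGradientAt.mp (hdfull xp).hasFDerivAt).gradient
  -- descent inequality
  have hT0' : f xp - (∑ i ∈ Finset.range (m+2+1), ((i.factorial : ℝ))⁻¹ •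
      iteratedFDeriv ℝ i f x (fun _ => xp - x))
      ≤ Hf / ((m+2).factorial : ℝ) * ‖xp - x‖ ^ (((m+2:ℕ):ℝ) + ν) := by
    have h := hT0
    rw [Real.norm_eq_abs] at h
    linarith [(abs_le.mp h).2]
  have hdescent : (f x + φ x) - (f xp + φ xp) ≥
      (H - Hf) / ((m+2).factorial : ℝ) * ‖xp - x‖ ^ (((m+2:ℕ):ℝ) + ν) := by
    rw [taylorPoly_eq] at hmodel
    have hexp : (H - Hf) / ((m+2).factorial : ℝ) * ‖xp - x‖ ^ (((m+2:ℕ):ℝ) + ν)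
        = H / ((m+2).factorial : ℝ) * ‖xp - x‖ ^ (((m+2:ℕ):ℝ) + ν)
          - Hf / ((m+2).factorial : ℝ) * ‖xp - x‖ ^ (((m+2:ℕ):ℝ) + ν) := by ring
    linarith [hmodel, hT0']
  rcases eq_or_ne (gradient f xp + gφ) 0 with hg0 | hg0
  · rw [hg0, norm_zero, Real.zero_rpow (ne_of_gt (div_pos hq0 hs0)), mul_zero]
    have h1 : (0:ℝ) ≤ (H - Hf) / ((m+2).factorial : ℝ) *
        ‖xp - x‖ ^ (((m+2:ℕ):ℝ) + ν) :=
      mul_nonneg (div_nonneg (by linarith) hF.le) (Real.rpow_nonneg (norm_nonneg _) _)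
    linarith [hdescent]
  have hgpos : (0:ℝ) < ‖gradient f xp + gφ‖ := norm_pos_iff.mpr hg0
  -- xp ≠ x
  have hxpx : xp ≠ x := by
    intro he
    apply hg0
    have hr0 : xp - x = 0 := by rw [he, sub_self]
    have hB0 : (H / ((m+2).factorial : ℝ)) • (((((m+2:ℕ):ℝ) + ν) *
        ‖xp - x‖ ^ ((((m+2:ℕ):ℝ) + ν) - 2)) • innerSL ℝ (xp - x)) = (0 : E →L[ℝ] ℝ) := by
      rw [hr0]; simp
    have hTval : (∑ j ∈ Finset.range (m+2), ((j.factorial : ℝ))⁻¹ •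
        (iteratedFDeriv ℝ j (fderiv ℝ f) x (fun _ => xp - x) : E →L[ℝ] ℝ))
        = fderiv ℝ f xp := by
      rw [hr0, show m+2 = (m+1)+1 from rfl, Finset.sum_range_succ']
      have hz : ∀ j ∈ Finset.range (m+1), ((Nat.factorial (j+1) : ℝ))⁻¹ •
          (iteratedFDeriv ℝ (j+1) (fderiv ℝ f) x (fun _ => (0:E)) : E →L[ℝ] ℝ) = 0 := by
        intro j _
        rw [(iteratedFDeriv ℝ (j+1) (fderiv ℝ f) x).map_coord_zero (0 : Fin (j+1)) rfl,
          smul_zero]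
      rw [Finset.sum_congr rfl hz]
      simp [he]
    have hzero : θ * ‖xp - x‖ ^ (((m+2:ℕ):ℝ) + ν - 1) = 0 := by
      rw [hr0, norm_zero, Real.zero_rpow (ne_of_gt hs0), mul_zero]
    have hzer := norm_le_zero_iff.mp (le_trans happrox (le_of_eq hzero))
    rw [hgf, show fderiv ℝ f xp = (∑ j ∈ Finset.range (m+2), ((j.factorial : ℝ))⁻¹ •
        (iteratedFDeriv ℝ j (fderiv ℝ f) x (fun _ => xp - x) : E →L[ℝ] ℝ))
       + (H / ((m+2).factorial : ℝ)) • (((((m+2:ℕ):ℝ) + ν) *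
        ‖xp - x‖ ^ ((((m+2:ℕ):ℝ) + ν) - 2)) • innerSL ℝ (xp - x)) by
        rw [hB0, add_zero, hTval]]
    exact hzer
  have hrpos : (0:ℝ) < ‖xp - x‖ := by rw [norm_pos_iff, sub_ne_zero]; exact hxpx
  -- bound on the gradient norm : three pieces
  have hsub1 : ‖(InnerProductSpace.toDual ℝ E).symm (fderiv ℝ f xp)
      - (InnerProductSpace.toDual ℝ E).symm (∑ j ∈ Finset.range (m+2),
        ((j.factorial : ℝ))⁻¹ •
        (iteratedFDeriv ℝ j (fderiv ℝ f) x (fun _ => xp - x) : E →L[ℝ] ℝ))‖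
      ≤ Hf / ((m+1).factorial : ℝ) * ‖xp - x‖ ^ (((m+2:ℕ):ℝ) + ν - 1) := by
    rw [← LinearIsometryEquiv.map_sub, LinearIsometryEquiv.norm_map]
    have hexp : ((m+1:ℕ):ℝ) + ν = ((m+2:ℕ):ℝ) + ν - 1 := by push_cast; ring
    rw [← hexp]
    exact hT1
  have hBnorm : ‖(InnerProductSpace.toDual ℝ E).symm
      ((H / ((m+2).factorial : ℝ)) • (((((m+2:ℕ):ℝ) + ν) *
        ‖xp - x‖ ^ ((((m+2:ℕ):ℝ) + ν) - 2)) • innerSL ℝ (xp - x)))‖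
      ≤ H * (((m+2:ℕ):ℝ) + 1) / ((m+2).factorial : ℝ)
        * ‖xp - x‖ ^ (((m+2:ℕ):ℝ) + ν - 1) := by
    rw [LinearIsometryEquiv.norm_map, norm_smul, norm_smul, innerSL_apply_norm]
    rw [Real.norm_eq_abs, Real.norm_eq_abs, abs_of_nonneg (div_nonneg hH0 hF.le),
      abs_of_nonneg (mul_nonneg hq0.le (Real.rpow_nonneg (norm_nonneg _) _))]
    have hR1 : ‖xp - x‖ ^ ((((m+2:ℕ):ℝ) + ν) - 2) * ‖xp - x‖
        = ‖xp - x‖ ^ (((m+2:ℕ):ℝ) + ν - 1) := by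
      rw [← Real.rpow_add_one (ne_of_gt hrpos)]
      congr 1; ring
    calc H / ((m+2).factorial : ℝ) * ((((m+2:ℕ):ℝ) + ν) *
          ‖xp - x‖ ^ ((((m+2:ℕ):ℝ) + ν) - 2) * ‖xp - x‖)
        = H / ((m+2).factorial : ℝ) * (((m+2:ℕ):ℝ) + ν) *
          (‖xp - x‖ ^ ((((m+2:ℕ):ℝ) + ν) - 2) * ‖xp - x‖) := by ring
      _ = H / ((m+2).factorial : ℝ) * (((m+2:ℕ):ℝ) + ν) *
          ‖xp - x‖ ^ (((m+2:ℕ):ℝ) + ν - 1) := by rw [hR1]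
      _ ≤ H * (((m+2:ℕ):ℝ) + 1) / ((m+2).factorial : ℝ)
          * ‖xp - x‖ ^ (((m+2:ℕ):ℝ) + ν - 1) := by
          apply mul_le_mul_of_nonneg_right _ (Real.rpow_nonneg (norm_nonneg _) _)
          rw [div_mul_eq_mul_div]
          apply div_le_div_of_nonneg_right ?_ hF.le
          nlinarith
  -- assemble
  have hgb : ‖gradient f xp + gφ‖
      ≤ (H * (4 * ((m+2:ℕ):ℝ) + 6) / (3 * ((m+2).factorial : ℝ)))
        * ‖xp - x‖ ^ (((m+2:ℕ):ℝ) + ν - 1) := by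
    have hdecomp : gradient f xp + gφ
        = ((InnerProductSpace.toDual ℝ E).symm (fderiv ℝ f xp)
            - (InnerProductSpace.toDual ℝ E).symm (∑ j ∈ Finset.range (m+2),
              ((j.factorial : ℝ))⁻¹ •
              (iteratedFDeriv ℝ j (fderiv ℝ f) x (fun _ => xp - x) : E →L[ℝ] ℝ)))
          + (-((InnerProductSpace.toDual ℝ E).symm
              ((H / ((m+2).factorial : ℝ)) • (((((m+2:ℕ):ℝ) + ν) *
                ‖xp - x‖ ^ ((((m+2:ℕ):ℝ) + ν) - 2)) • innerSL ℝ (xp - x)))))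
          + ((InnerProductSpace.toDual ℝ E).symm
              ((∑ j ∈ Finset.range (m+2), ((j.factorial : ℝ))⁻¹ •
                (iteratedFDeriv ℝ j (fderiv ℝ f) x (fun _ => xp - x) : E →L[ℝ] ℝ))
               + (H / ((m+2).factorial : ℝ)) • (((((m+2:ℕ):ℝ) + ν) *
                ‖xp - x‖ ^ ((((m+2:ℕ):ℝ) + ν) - 2)) • innerSL ℝ (xp - x))) + gφ) := by
      rw [hgf, map_add]
      abel
    rw [hdecomp]
    refine le_trans (norm_add₃_le) ?_
    rw [norm_neg]
    have hcoef : Hf / ((m+1).factorial : ℝ)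
        + H * (((m+2:ℕ):ℝ) + 1) / ((m+2).factorial : ℝ) + θ
        ≤ H * (4 * ((m+2:ℕ):ℝ) + 6) / (3 * ((m+2).factorial : ℝ)) := by
      have hfact : ((m+2).factorial : ℝ) = ((m+2:ℕ):ℝ) * ((m+1).factorial : ℝ) := by
        rw [show m+2 = (m+1)+1 from rfl, Nat.factorial_succ]
        push_cast; ring
      have hP0 : (0:ℝ) < ((m+2:ℕ):ℝ) := by linarith
      have hnum : (0:ℝ) ≤ ((m+2:ℕ):ℝ) * (H - 3*θ*((m+1).factorial : ℝ))
          + 3*(H - ((m+2:ℕ):ℝ)*Hf) := by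
        have h1 : (0:ℝ) ≤ H - 3*θ*((m+1).factorial : ℝ) := by linarith
        have h2 : (0:ℝ) ≤ H - ((m+2:ℕ):ℝ)*Hf := by linarith
        have := mul_nonneg hP0.le h1
        linarith
      have heq : H * (4 * ((m+2:ℕ):ℝ) + 6) / (3 * (((m+2:ℕ):ℝ) * ((m+1).factorial : ℝ)))
          - (Hf / ((m+1).factorial : ℝ)
            + H * (((m+2:ℕ):ℝ) + 1) / (((m+2:ℕ):ℝ) * ((m+1).factorial : ℝ)) + θ)
          = (((m+2:ℕ):ℝ) * (H - 3*θ*((m+1).factorial : ℝ))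
            + 3*(H - ((m+2:ℕ):ℝ)*Hf)) / (3 * (((m+2:ℕ):ℝ) * ((m+1).factorial : ℝ))) := by
        field_simp
        ring
      rw [hfact]
      have hd := div_nonneg hnum (by positivity : (0:ℝ) ≤ 3 * (((m+2:ℕ):ℝ) * ((m+1).factorial : ℝ)))
      linarith [heq, hd]
    calc ‖_‖ + ‖_‖ + ‖_‖
        ≤ Hf / ((m+1).factorial : ℝ) * ‖xp - x‖ ^ (((m+2:ℕ):ℝ) + ν - 1)
          + H * (((m+2:ℕ):ℝ) + 1) / ((m+2).factorial : ℝ)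
            * ‖xp - x‖ ^ (((m+2:ℕ):ℝ) + ν - 1)
          + θ * ‖xp - x‖ ^ (((m+2:ℕ):ℝ) + ν - 1) :=
          add_le_add (add_le_add hsub1 hBnorm) happrox
      _ = (Hf / ((m+1).factorial : ℝ)
            + H * (((m+2:ℕ):ℝ) + 1) / ((m+2).factorial : ℝ) + θ)
          * ‖xp - x‖ ^ (((m+2:ℕ):ℝ) + ν - 1) := by ring
      _ ≤ (H * (4 * ((m+2:ℕ):ℝ) + 6) / (3 * ((m+2).factorial : ℝ)))
          * ‖xp - x‖ ^ (((m+2:ℕ):ℝ) + ν - 1) :=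
          mul_le_mul_of_nonneg_right hcoef (Real.rpow_nonneg (norm_nonneg _) _)
  -- positivity of H
  have hHpos : (0:ℝ) < H := by
    rcases lt_or_eq_of_le hH0 with h | h
    · exact h
    · exfalso
      rw [← h, zero_mul, zero_div, zero_mul] at hgb
      linarith
  have hCHpos : (0:ℝ) < H * (4 * ((m+2:ℕ):ℝ) + 6) / (3 * ((m+2).factorial : ℝ)) :=
    div_pos (mul_pos hHpos (by linarith)) (by positivity)
  -- lower bound on ‖xp-x‖ via the gradient norm
  have hgR : ‖gradient f xp + gφ‖ / (H * (4 * ((m+2:ℕ):ℝ) + 6) / (3 * ((m+2).factorial : ℝ)))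
      ≤ ‖xp - x‖ ^ (((m+2:ℕ):ℝ) + ν - 1) :=
    (div_le_iff₀ hCHpos).mpr (by linarith [hgb])
  have hApos : (0:ℝ) < ‖gradient f xp + gφ‖
      / (H * (4 * ((m+2:ℕ):ℝ) + 6) / (3 * ((m+2).factorial : ℝ))) := div_pos hgpos hCHpos
  have hRlow : (‖gradient f xp + gφ‖
      / (H * (4 * ((m+2:ℕ):ℝ) + 6) / (3 * ((m+2).factorial : ℝ))))
      ^ ((1:ℝ)/(((m+2:ℕ):ℝ) + ν - 1)) ≤ ‖xp - x‖ := by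
    have h := Real.rpow_le_rpow hApos.le hgR
      (by positivity : (0:ℝ) ≤ 1/(((m+2:ℕ):ℝ) + ν - 1))
    rwa [← Real.rpow_mul (norm_nonneg _), mul_one_div, div_self (ne_of_gt hs0),
      Real.rpow_one] at h
  have hRq : (‖gradient f xp + gφ‖
      / (H * (4 * ((m+2:ℕ):ℝ) + 6) / (3 * ((m+2).factorial : ℝ))))
      ^ ((((m+2:ℕ):ℝ) + ν)/(((m+2:ℕ):ℝ) + ν - 1)) ≤ ‖xp - x‖ ^ (((m+2:ℕ):ℝ) + ν) := by
    have h := Real.rpow_le_rpow (Real.rpow_nonneg hApos.le _) hRlow hq0.le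
    rwa [← Real.rpow_mul hApos.le,
      show (1/(((m+2:ℕ):ℝ) + ν - 1)) * (((m+2:ℕ):ℝ) + ν)
        = (((m+2:ℕ):ℝ) + ν)/(((m+2:ℕ):ℝ) + ν - 1) by ring] at h
  -- split the power of the quotient
  have hsplit : (‖gradient f xp + gφ‖
      / (H * (4 * ((m+2:ℕ):ℝ) + 6) / (3 * ((m+2).factorial : ℝ))))
      ^ ((((m+2:ℕ):ℝ) + ν)/(((m+2:ℕ):ℝ) + ν - 1))
      = ‖gradient f xp + gφ‖ ^ ((((m+2:ℕ):ℝ) + ν)/(((m+2:ℕ):ℝ) + ν - 1))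
        / (H * (4 * ((m+2:ℕ):ℝ) + 6) / (3 * ((m+2).factorial : ℝ)))
          ^ ((((m+2:ℕ):ℝ) + ν)/(((m+2:ℕ):ℝ) + ν - 1)) :=
    Real.div_rpow (norm_nonneg _) hCHpos.le _
  have he2 : (((m+2:ℕ):ℝ) + ν)/(((m+2:ℕ):ℝ) + ν - 1) ≤ 2 := by
    rw [div_le_iff₀ hs0]; linarith
  have hCHsplit : (H * (4 * ((m+2:ℕ):ℝ) + 6) / (3 * ((m+2).factorial : ℝ)))
      ^ ((((m+2:ℕ):ℝ) + ν)/(((m+2:ℕ):ℝ) + ν - 1))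
      = H ^ ((((m+2:ℕ):ℝ) + ν)/(((m+2:ℕ):ℝ) + ν - 1))
        * ((4 * ((m+2:ℕ):ℝ) + 6) / (3 * ((m+2).factorial : ℝ)))
          ^ ((((m+2:ℕ):ℝ) + ν)/(((m+2:ℕ):ℝ) + ν - 1)) := by
    rw [mul_div_assoc, Real.mul_rpow hH0 (by positivity)]
  have hKp : ((4 * ((m+2:ℕ):ℝ) + 6) / (3 * ((m+2).factorial : ℝ)))
      ^ ((((m+2:ℕ):ℝ) + ν)/(((m+2:ℕ):ℝ) + ν - 1)) ≤ 4 * (((m+2:ℕ):ℝ) + 1) := by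
    set Kp := (4 * ((m+2:ℕ):ℝ) + 6) / (3 * ((m+2).factorial : ℝ)) with hKpdef
    have hKp0 : (0:ℝ) ≤ Kp := by positivity
    rcases le_or_gt Kp 1 with hk | hk
    · refine le_trans (Real.rpow_le_one hKp0 hk (by positivity)) (by linarith)
    · have h1 := Real.rpow_le_rpow_of_exponent_le hk.le he2
      have h2 : Kp ^ (2:ℝ) = Kp ^ (2:ℕ) := by
        rw [← Real.rpow_natCast]; norm_num
      rw [h2] at h1
      refine le_trans h1 ?_
      rw [hKpdef, div_pow, div_le_iff₀ (by positivity)]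
      have hFP : ((m+2:ℕ):ℝ) ≤ ((m+2).factorial : ℝ) := by
        exact_mod_cast Nat.self_le_factorial (m+2)
      nlinarith [hFP, hP2, hF, sq_nonneg (((m+2:ℕ):ℝ) - 2)]
  have hHq : H ^ ((1:ℝ)/(((m+2:ℕ):ℝ) + ν - 1)) * H
      = H ^ ((((m+2:ℕ):ℝ) + ν)/(((m+2:ℕ):ℝ) + ν - 1)) := by
    have hexpq : (((m+2:ℕ):ℝ) + ν)/(((m+2:ℕ):ℝ) + ν - 1)
        = 1/(((m+2:ℕ):ℝ) + ν - 1) + 1 := by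
      rw [div_eq_iff (ne_of_gt hs0), add_mul, one_div,
        inv_mul_cancel₀ (ne_of_gt hs0), one_mul]
      ring
    rw [hexpq, Real.rpow_add hHpos, Real.rpow_one]
  have hF2eq : ((m+2+1).factorial : ℝ) = (((m+2:ℕ):ℝ) + 1) * ((m+2).factorial : ℝ) := by
    rw [Nat.factorial_succ]; push_cast; ring
  have hkey : ((m+2).factorial : ℝ)
      * ((H * (4 * ((m+2:ℕ):ℝ) + 6) / (3 * ((m+2).factorial : ℝ)))
        ^ ((((m+2:ℕ):ℝ) + ν)/(((m+2:ℕ):ℝ) + ν - 1)))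
      ≤ 4 * ((((m+2:ℕ):ℝ) + 1) * ((m+2).factorial : ℝ))
        * (H ^ ((1:ℝ)/(((m+2:ℕ):ℝ) + ν - 1)) * H) := by
    rw [hCHsplit, hHq]
    calc ((m+2).factorial : ℝ) * (H ^ ((((m+2:ℕ):ℝ) + ν)/(((m+2:ℕ):ℝ) + ν - 1))
          * ((4 * ((m+2:ℕ):ℝ) + 6) / (3 * ((m+2).factorial : ℝ)))
            ^ ((((m+2:ℕ):ℝ) + ν)/(((m+2:ℕ):ℝ) + ν - 1)))
        ≤ ((m+2).factorial : ℝ) * (H ^ ((((m+2:ℕ):ℝ) + ν)/(((m+2:ℕ):ℝ) + ν - 1))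
          * (4 * (((m+2:ℕ):ℝ) + 1))) := by
          apply mul_le_mul_of_nonneg_left _ hF.le
          exact mul_le_mul_of_nonneg_left hKp (Real.rpow_nonneg hH0 _)
      _ = 4 * ((((m+2:ℕ):ℝ) + 1) * ((m+2).factorial : ℝ))
          * H ^ ((((m+2:ℕ):ℝ) + ν)/(((m+2:ℕ):ℝ) + ν - 1)) := by ring
  have hgqs : (0:ℝ) ≤ ‖gradient f xp + gφ‖
      ^ ((((m+2:ℕ):ℝ) + ν)/(((m+2:ℕ):ℝ) + ν - 1)) :=
    Real.rpow_nonneg (norm_nonneg _) _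
  have hHs : (0:ℝ) < H ^ ((1:ℝ)/(((m+2:ℕ):ℝ) + ν - 1)) := Real.rpow_pos_of_pos hHpos _
  have hCHs : (0:ℝ) < (H * (4 * ((m+2:ℕ):ℝ) + 6) / (3 * ((m+2).factorial : ℝ)))
      ^ ((((m+2:ℕ):ℝ) + ν)/(((m+2:ℕ):ℝ) + ν - 1)) := Real.rpow_pos_of_pos hCHpos _
  have hcoef2 : 1 / (8 * (((m+2+1).factorial : ℝ)) * H ^ (1/(((m+2:ℕ):ℝ) + ν - 1)))
      ≤ (H/2) / ((m+2).factorial : ℝ)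
        / ((H * (4 * ((m+2:ℕ):ℝ) + 6) / (3 * ((m+2).factorial : ℝ)))
          ^ ((((m+2:ℕ):ℝ) + ν)/(((m+2:ℕ):ℝ) + ν - 1))) := by
    rw [div_div, div_le_div_iff₀ (by positivity) (by positivity)]
    rw [hF2eq]
    nlinarith [hkey]
  -- final chain
  calc (f x + φ x) - (f xp + φ xp)
      ≥ (H - Hf) / ((m+2).factorial : ℝ) * ‖xp - x‖ ^ (((m+2:ℕ):ℝ) + ν) := hdescent
    _ ≥ (H/2) / ((m+2).factorial : ℝ) * ‖xp - x‖ ^ (((m+2:ℕ):ℝ) + ν) := by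
        apply mul_le_mul_of_nonneg_right _ (Real.rpow_nonneg (norm_nonneg _) _)
        apply div_le_div_of_nonneg_right ?_ hF.le
        linarith
    _ ≥ (H/2) / ((m+2).factorial : ℝ) * ((‖gradient f xp + gφ‖
          / (H * (4 * ((m+2:ℕ):ℝ) + 6) / (3 * ((m+2).factorial : ℝ))))
          ^ ((((m+2:ℕ):ℝ) + ν)/(((m+2:ℕ):ℝ) + ν - 1))) := by
        apply mul_le_mul_of_nonneg_left hRq (div_nonneg (by linarith) hF.le)
    _ = ((H/2) / ((m+2).factorial : ℝ)
          / ((H * (4 * ((m+2:ℕ):ℝ) + 6) / (3 * ((m+2).factorial : ℝ)))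
            ^ ((((m+2:ℕ):ℝ) + ν)/(((m+2:ℕ):ℝ) + ν - 1))))
        * ‖gradient f xp + gφ‖ ^ ((((m+2:ℕ):ℝ) + ν)/(((m+2:ℕ):ℝ) + ν - 1)) := by
        rw [hsplit]; ring
    _ ≥ 1 / (8 * (((m+2+1).factorial : ℝ)) * H ^ (1/(((m+2:ℕ):ℝ) + ν - 1)))
        * ‖gradient f xp + gφ‖ ^ ((((m+2:ℕ):ℝ) + ν)/(((m+2:ℕ):ℝ) + ν - 1)) :=
        mul_le_mul_of_nonneg_right hcoef2 hgqs
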